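/- Let P1, P2 : J → (0,∞) be functions on a finite index set J, and let (X(ω))_{ω∈J} be independent with X(ω) ~ Poisson(P1(ω)). Then P( Σ_{ω∈J} X(ω)·log(P2(ω)/P1(ω)) > Σ_{ω∈J} (P2(ω) − P1(ω)) ) ≤ exp(−I*/2), where I* = Σ_{ω∈J} (√(P1(ω)) − √(P2(ω)))². -/

import Mathlib

open MeasureTheory Real ProbabilityTheory

lemma poisson_exp_lintegral {Ω : Type*} [MeasurableSpace Ω] (μ : Measure Ω)
    (lam s : ℝ) (hlam : 0 ≤ lam) (X : Ω → ℕ) (hX : Measurable X)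
    (hd : ∀ k : ℕ, μ {a | X a = k}
        = ENNReal.ofReal (Real.exp (-lam) * lam ^ k / (Nat.factorial k))) :
    ∫⁻ a, ENNReal.ofReal (Real.exp (s * (X a : ℝ))) ∂μ
      = ENNReal.ofReal (Real.exp (lam * (Real.exp s - 1))) := by
  have hmap : ∫⁻ a, ENNReal.ofReal (Real.exp (s * (X a : ℝ))) ∂μ
      = ∫⁻ k, ENNReal.ofReal (Real.exp (s * (k : ℝ))) ∂(μ.map X) := by
    rw [lintegral_map measurable_from_nat hX]
  rw [hmap, lintegral_countable']
  have hsing : ∀ k : ℕ, (μ.map X) {k}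
      = ENNReal.ofReal (Real.exp (-lam) * lam ^ k / (Nat.factorial k)) := by
    intro k
    rw [Measure.map_apply hX (measurableSet_singleton k)]
    have : X ⁻¹' {k} = {a | X a = k} := by ext a; simp
    rw [this, hd]
  have hterm : ∀ k : ℕ, ENNReal.ofReal (Real.exp (s * (k : ℝ))) * (μ.map X) {k}
      = ENNReal.ofReal (Real.exp (-lam) * (lam * Real.exp s) ^ k / (Nat.factorial k)) := by
    intro k
    rw [hsing k, ← ENNReal.ofReal_mul (Real.exp_nonneg _)]
    congr 1
    have h1 : Real.exp (s * (k : ℝ)) = (Real.exp s) ^ k := by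
      rw [mul_comm, Real.exp_nat_mul]
    rw [h1, mul_pow]
    ring
  simp_rw [hterm]
  have hsum : Summable (fun k : ℕ =>
      Real.exp (-lam) * (lam * Real.exp s) ^ k / (Nat.factorial k)) := by
    simp_rw [mul_div_assoc]
    exact (Real.summable_pow_div_factorial (lam * Real.exp s)).mul_left _
  have hnonneg : ∀ k : ℕ, 0 ≤ Real.exp (-lam) * (lam * Real.exp s) ^ k / (Nat.factorial k) := by
    intro k
    apply div_nonneg _ (Nat.cast_nonneg _)
    exact mul_nonneg (Real.exp_nonneg _) (pow_nonneg (mul_nonneg hlam (Real.exp_nonneg _)) _)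
  rw [← ENNReal.ofReal_tsum_of_nonneg hnonneg hsum]
  congr 1
  have htsum : ∑' k : ℕ, Real.exp (-lam) * (lam * Real.exp s) ^ k / (Nat.factorial k)
      = Real.exp (-lam) * ∑' k : ℕ, (lam * Real.exp s) ^ k / (Nat.factorial k) := by
    rw [← tsum_mul_left]
    congr 1 with k
    ring
  rw [htsum]
  have hexp : ∑' k : ℕ, (lam * Real.exp s) ^ k / (Nat.factorial k)
      = Real.exp (lam * Real.exp s) := by
    rw [Real.exp_eq_exp_ℝ, NormedSpace.exp_eq_tsum_div]
  rw [hexp, ← Real.exp_add]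
  congr 1
  ring

lemma poisson_mgf_aux {Ω : Type*} [MeasurableSpace Ω] (μ : Measure Ω) [IsProbabilityMeasure μ]
    (lam s : ℝ) (hlam : 0 ≤ lam) (X : Ω → ℕ) (hX : Measurable X)
    (hd : ∀ k : ℕ, μ {a | X a = k}
        = ENNReal.ofReal (Real.exp (-lam) * lam ^ k / (Nat.factorial k))) :
    Integrable (fun a => Real.exp (s * (X a : ℝ))) μ ∧
    ∫ a, Real.exp (s * (X a : ℝ)) ∂μ = Real.exp (lam * (Real.exp s - 1)) := by
  have hmeas : Measurable (fun a => Real.exp (s * (X a : ℝ))) :=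
    (measurable_from_nat (f := fun k : ℕ => Real.exp (s * (k : ℝ)))).comp hX
  have hli := poisson_exp_lintegral μ lam s hlam X hX hd
  have hnn : 0 ≤ᵐ[μ] fun a => Real.exp (s * (X a : ℝ)) :=
    Filter.Eventually.of_forall fun a => Real.exp_nonneg _
  have hint : Integrable (fun a => Real.exp (s * (X a : ℝ))) μ := by
    refine ⟨hmeas.aestronglyMeasurable, ?_⟩
    rw [hasFiniteIntegral_iff_ofReal hnn, hli]
    exact ENNReal.ofReal_lt_top
  refine ⟨hint, ?_⟩
  rw [integral_eq_lintegral_of_nonneg_ae hnn hmeas.aestronglyMeasurable, hli,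
    ENNReal.toReal_ofReal (Real.exp_nonneg _)]

/-- Oracle Chernoff bound for independent Poisson entries: the likelihood-ratio test
mis-clustering probability is at most `exp(-I*/2)` with
`I* = Σ (√(P1 ω) - √(P2 ω))²`. -/
theorem poisson_loglik_tail_bound
    {Ω : Type*} [MeasurableSpace Ω] (μ : Measure Ω) [IsProbabilityMeasure μ]
    {J : Type*} [Fintype J]
    (P1 P2 : J → ℝ) (hP1 : ∀ ω, 0 < P1 ω) (hP2 : ∀ ω, 0 < P2 ω)
    (X : J → Ω → ℕ) (hX : ∀ ω, Measurable (X ω))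
    (hind : iIndepFun X μ)
    (hd : ∀ ω, ∀ k : ℕ, μ {a | X ω a = k}
        = ENNReal.ofReal (Real.exp (-(P1 ω)) * (P1 ω) ^ k / (Nat.factorial k))) :
    (μ {a | ∑ ω, (X ω a : ℝ) * Real.log (P2 ω / P1 ω)
        > ∑ ω, (P2 ω - P1 ω)}).toReal
      ≤ Real.exp (-(∑ ω, (Real.sqrt (P1 ω) - Real.sqrt (P2 ω)) ^ 2) / 2) := by
  classical
  set c : J → ℝ := fun ω => Real.log (P2 ω / P1 ω) with hc
  set Y : J → Ω → ℝ := fun ω a => (X ω a : ℝ) * c ω with hYdef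
  have hYmeas : ∀ ω, Measurable (Y ω) := fun ω =>
    (measurable_from_nat (f := fun k : ℕ => (k : ℝ) * c ω)).comp (hX ω)
  have hYind : iIndepFun Y μ := by
    have := hind.comp (fun ω (k : ℕ) => (k : ℝ) * c ω) (fun ω => measurable_from_nat)
    exact this
  -- per-coordinate exponential rewriting
  have hhalf : ∀ ω, (fun a => Real.exp ((1/2 : ℝ) * Y ω a))
      = fun a => Real.exp ((c ω / 2) * (X ω a : ℝ)) := by
    intro ω
    funext a
    congr 1
    simp only [hYdef]
    ring
  have hper : ∀ ω : J, Integrable (fun a => Real.exp ((1/2 : ℝ) * Y ω a)) μ ∧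
      ∫ a, Real.exp ((1/2 : ℝ) * Y ω a) ∂μ
        = Real.exp (Real.sqrt (P1 ω) * Real.sqrt (P2 ω) - P1 ω) := by
    intro ω
    have h := poisson_mgf_aux μ (P1 ω) (c ω / 2) (hP1 ω).le (X ω) (hX ω) (hd ω)
    have hexps : Real.exp (c ω / 2) = Real.sqrt (P2 ω / P1 ω) := by
      rw [Real.sqrt_eq_rpow, Real.rpow_def_of_pos (div_pos (hP2 ω) (hP1 ω))]
      congr 1
      simp only [hc]
      ring
    have hval : P1 ω * (Real.exp (c ω / 2) - 1)
        = Real.sqrt (P1 ω) * Real.sqrt (P2 ω) - P1 ω := by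
      rw [hexps, Real.sqrt_div (hP2 ω).le]
      have h1 : P1 ω * (Real.sqrt (P2 ω) / Real.sqrt (P1 ω))
          = Real.sqrt (P1 ω) * Real.sqrt (P2 ω) := by
        have hs : Real.sqrt (P1 ω) ≠ 0 := (Real.sqrt_pos.mpr (hP1 ω)).ne'
        field_simp
        linear_combination (-1 : ℝ) * Real.sqrt (P2 ω) * Real.sq_sqrt (hP1 ω).le
      rw [mul_sub, h1, mul_one]
    rw [hhalf ω]
    exact ⟨h.1, by rw [h.2, hval]⟩
  -- Chernoff bound
  set S : Ω → ℝ := ∑ ω, Y ω with hS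
  have hSapp : ∀ a, S a = ∑ ω, (X ω a : ℝ) * c ω := by
    intro a
    show (∑ ω, Y ω) a = _
    rw [Finset.sum_apply]
  set C : ℝ := ∑ ω, (P2 ω - P1 ω) with hC
  have hintS : Integrable (fun a => Real.exp ((1/2 : ℝ) * S a)) μ := by
    have := hYind.integrable_exp_mul_sum (t := (1/2 : ℝ)) hYmeas
      (s := Finset.univ) (fun ω _ => (hper ω).1)
    exact this
  have hsub : {a | ∑ ω, (X ω a : ℝ) * Real.log (P2 ω / P1 ω) > C} ⊆ {a | C ≤ S a} := by
    intro a ha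
    rw [Set.mem_setOf_eq, hSapp]
    exact le_of_lt ha
  have hchern := measure_ge_le_exp_mul_mgf (μ := μ) (X := S) C (by norm_num : (0:ℝ) ≤ 1/2) hintS
  have hmono : (μ {a | ∑ ω, (X ω a : ℝ) * Real.log (P2 ω / P1 ω) > C}).toReal
      ≤ (μ {a | C ≤ S a}).toReal :=
    ENNReal.toReal_mono (measure_ne_top μ _) (measure_mono hsub)
  have hmgf : mgf S μ (1/2) = ∏ ω, Real.exp (Real.sqrt (P1 ω) * Real.sqrt (P2 ω) - P1 ω) := by
    rw [hS, hYind.mgf_sum hYmeas]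
    exact Finset.prod_congr rfl fun ω _ => (hper ω).2
  have hfinal : Real.exp (-(1/2) * C) * mgf S μ (1/2)
      = Real.exp (-(∑ ω, (Real.sqrt (P1 ω) - Real.sqrt (P2 ω)) ^ 2) / 2) := by
    rw [hmgf, ← Real.exp_sum, ← Real.exp_add]
    congr 1
    rw [hC, Finset.mul_sum, ← Finset.sum_add_distrib, ← Finset.sum_neg_distrib,
      Finset.sum_div]
    apply Finset.sum_congr rfl
    intro ω _
    have h1 : Real.sqrt (P1 ω) ^ 2 = P1 ω := Real.sq_sqrt (hP1 ω).le
    have h2 : Real.sqrt (P2 ω) ^ 2 = P2 ω := Real.sq_sqrt (hP2 ω).le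
    nlinarith [h1, h2]
  calc (μ {a | ∑ ω, (X ω a : ℝ) * Real.log (P2 ω / P1 ω) > C}).toReal
      ≤ (μ {a | C ≤ S a}).toReal := hmono
    _ ≤ Real.exp (-(1/2) * C) * mgf S μ (1/2) := hchern
    _ = Real.exp (-(∑ ω, (Real.sqrt (P1 ω) - Real.sqrt (P2 ω)) ^ 2) / 2) := hfinal
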